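/- In the projection setup, every vector x j lies in Vᗮ, the family (x j)_{j : Fin m} is linearly independent, and it spans Vᗮ; hence (x j) is a basis of Vᗮ. (This corresponds to Lemma 3.6: the dimension vectors of the simple objects of the wide subcategory 𝒲_E form a basis of span(E)^⊥.) -/

import Mathlib

open RealInnerProductSpace

/-- Lemma 3.6: the vectors `x j` (the dimension vectors of the simple objects
of the wide subcategory) all lie in `Vᗮ`, are linearly independent, and span
`Vᗮ`; hence they form a basis of `Vᗮ`. -/
theorem stmt8 (n m : ℕ) (hn : 0 < n) (hmn : m ≤ n)
    (g : Fin n → EuclideanSpace ℝ (Fin n))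
    (hg : LinearIndependent ℝ g)
    (hgspan : Submodule.span ℝ (Set.range g) = ⊤)
    (x : Fin m → EuclideanSpace ℝ (Fin n)) (d : Fin m → ℝ)
    (hd : ∀ j, 0 < d j)
    (hpair : ∀ (i : Fin n) (j : Fin m),
      ⟪g i, x j⟫ = if (i : ℕ) = (j : ℕ) then d j else 0)
    (V : Submodule ℝ (EuclideanSpace ℝ (Fin n)))
    (hV : V = Submodule.span ℝ {v | ∃ i : Fin n, m ≤ (i : ℕ) ∧ v = g i})
    (ν : EuclideanSpace ℝ (Fin n) → EuclideanSpace ℝ (Fin n))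
    (hν : ∀ v, ν v = (Submodule.orthogonalProjectionOnto Vᗮ v : EuclideanSpace ℝ (Fin n))) :
    (∀ j, x j ∈ Vᗮ) ∧
    LinearIndependent ℝ x ∧
    Submodule.span ℝ (Set.range x) = Vᗮ := by
  -- membership
  have hmem : ∀ j, x j ∈ Vᗮ := by
    intro j
    rw [Submodule.mem_orthogonal]
    intro u hu
    rw [hV] at hu
    induction hu using Submodule.span_induction with
    | mem v hv =>
      obtain ⟨i, hi, rfl⟩ := hv
      rw [hpair i j, if_neg]
      omega
    | zero => simp
    | add a b _ _ ha hb => rw [inner_add_left, ha, hb, add_zero]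
    | smul c a _ ha => rw [inner_smul_left, ha, mul_zero]
  -- linear independence
  have hli : LinearIndependent ℝ x := by
    rw [linearIndependent_iff']
    intro s f hsum j hj
    have h := congrArg (fun v => ⟪g (Fin.castLE hmn j), v⟫) hsum
    simp only [inner_sum, inner_smul_right, hpair, Fin.coe_castLE, inner_zero_right] at h
    rw [Finset.sum_eq_single_of_mem j hj (fun k _ hk => by
      rw [if_neg (fun h' => hk ((Fin.ext h').symm)), mul_zero])] at h
    rw [if_pos rfl] at h
    exact (mul_eq_zero.mp h).resolve_right (hd j).ne'
  refine ⟨hmem, hli, ?_⟩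
  -- span
  have hle : Submodule.span ℝ (Set.range x) ≤ Vᗮ := by
    rw [Submodule.span_le]; rintro _ ⟨j, rfl⟩; exact hmem j
  -- finrank Vᗮ ≤ m via injective map v ↦ (⟪g i, v⟫)_{i < m}
  let L : Vᗮ →ₗ[ℝ] (Fin m → ℝ) :=
    (LinearMap.pi fun j : Fin m =>
      (innerSL ℝ (g (Fin.castLE hmn j))).toLinearMap) ∘ₗ Vᗮ.subtype
  have hLinj : Function.Injective L := by
    rw [← LinearMap.ker_eq_bot, LinearMap.ker_eq_bot']
    rintro ⟨w, hw⟩ hLw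
    have hall : ∀ i : Fin n, ⟪g i, w⟫ = 0 := by
      intro i
      by_cases hi : (i : ℕ) < m
      · have := congrFun hLw ⟨i, hi⟩
        simpa [L, Fin.ext_iff] using this
      · refine hw (g i) ?_
        rw [hV]
        exact Submodule.subset_span ⟨i, by omega, rfl⟩
    have : w ∈ (Submodule.span ℝ (Set.range g))ᗮ := by
      rw [Submodule.mem_orthogonal]
      intro u hu
      induction hu using Submodule.span_induction with
      | mem v hv => obtain ⟨i, rfl⟩ := hv; exact hall i
      | zero => simp
      | add a b _ _ ha hb => rw [inner_add_left, ha, hb, add_zero]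
      | smul c a _ ha => rw [inner_smul_left, ha, mul_zero]
    rw [hgspan, Submodule.top_orthogonal_eq_bot] at this
    exact Subtype.ext this
  have h1 : Module.finrank ℝ Vᗮ ≤ m := by
    simpa using LinearMap.finrank_le_finrank_of_injective hLinj
  have h2 : Module.finrank ℝ (Submodule.span ℝ (Set.range x)) = m := by
    rw [finrank_span_eq_card hli, Fintype.card_fin]
  exact Submodule.eq_of_le_of_finrank_le hle (by omega)
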